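/- Let k ≥ 2, a ≥ 1 and d ≥ 1 be integers. Then there exists a prime q with k/2 < q ≤ k such that the q-adic valuation of the rational number ∏_{j=1}^k (j : ℚ)^{(−1)^{k−j}·binom(k,j)·j^a·d} (integer exponents, zpow) equals (−1)^{k−q}·binom(k,q)·q^a·d, which is nonzero; consequently ∏_{j=1}^k (j : ℚ)^{(−1)^{k−j}·binom(k,j)·j^a·d} ∉ {1, −1}. -/

import Mathlib

/-- `q`-adic valuation of a rational number, with `v_q(0) = ⊤`. -/
noncomputable def vpQ (q : ℕ) (x : ℚ) : WithTop ℤ :=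
  if x = 0 then ⊤ else (padicValRat q x : WithTop ℤ)

/-- The integer exponent `(-1)^(k-j) * C(k,j) * j^a * d`. -/
def expnt (k a d j : ℕ) : ℤ :=
  (-1) ^ (k - j) * (k.choose j : ℤ) * (j : ℤ) ^ a * (d : ℤ)

lemma padicValRat_zpow (p : ℕ) [Fact p.Prime] {q : ℚ} (hq : q ≠ 0) (n : ℤ) :
    padicValRat p (q ^ n) = n * padicValRat p q := by
  obtain ⟨m, rfl | rfl⟩ := n.eq_nat_or_neg
  · rw [zpow_natCast, padicValRat.pow q]
  · rw [zpow_neg, zpow_natCast, padicValRat.inv, padicValRat.pow q]; push_cast; ring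

lemma padicValRat_prod (p : ℕ) [Fact p.Prime] (s : Finset ℕ) (F : ℕ → ℚ)
    (hF : ∀ i ∈ s, F i ≠ 0) :
    padicValRat p (∏ i ∈ s, F i) = ∑ i ∈ s, padicValRat p (F i) := by
  classical
  induction s using Finset.induction_on with
  | empty => simp [padicValRat.one]
  | @insert b t hnot ih =>
    rw [Finset.prod_insert hnot, Finset.sum_insert hnot,
      padicValRat.mul (hF b (Finset.mem_insert_self b t))
        (Finset.prod_ne_zero_iff.2 fun i hi => hF i (Finset.mem_insert_of_mem hi)),
      ih fun i hi => hF i (Finset.mem_insert_of_mem hi)]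

theorem stmt10 (k a d : ℕ) (hk : 2 ≤ k) (ha : 1 ≤ a) (hd : 1 ≤ d) :
    ∃ q : ℕ, q.Prime ∧ k < 2 * q ∧ q ≤ k ∧
      vpQ q (∏ j ∈ Finset.Icc 1 k, (j : ℚ) ^ (expnt k a d j)) = (expnt k a d q : WithTop ℤ) ∧
      expnt k a d q ≠ 0 ∧
      (∏ j ∈ Finset.Icc 1 k, (j : ℚ) ^ (expnt k a d j)) ≠ 1 ∧
      (∏ j ∈ Finset.Icc 1 k, (j : ℚ) ^ (expnt k a d j)) ≠ -1 := by
  obtain ⟨q, hq, hq1, hq2⟩ := Nat.exists_prime_lt_and_le_two_mul (k / 2) (by omega)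
  have hqk : q ≤ k := le_trans hq2 (by omega)
  have h2q : k < 2 * q := by omega
  haveI : Fact q.Prime := ⟨hq⟩
  have hF : ∀ j ∈ Finset.Icc 1 k, ((j : ℚ) ^ expnt k a d j) ≠ 0 := by
    intro j hj
    have : (1 : ℕ) ≤ j := (Finset.mem_Icc.1 hj).1
    exact zpow_ne_zero _ (by exact_mod_cast by omega)
  have hprod_ne : (∏ j ∈ Finset.Icc 1 k, (j : ℚ) ^ expnt k a d j) ≠ 0 :=
    Finset.prod_ne_zero_iff.2 hF
  have hval : padicValRat q (∏ j ∈ Finset.Icc 1 k, (j : ℚ) ^ expnt k a d j)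
      = expnt k a d q := by
    rw [padicValRat_prod q _ _ hF]
    have hsum : ∀ j ∈ Finset.Icc 1 k,
        padicValRat q ((j : ℚ) ^ expnt k a d j)
          = if j = q then expnt k a d q else 0 := by
      intro j hj
      obtain ⟨hj1, hj2⟩ := Finset.mem_Icc.1 hj
      have hj0 : (j : ℚ) ≠ 0 := Nat.cast_ne_zero.2 (by omega)
      rw [padicValRat_zpow q hj0]
      by_cases h : j = q
      · subst h
        rw [padicValRat.self hq.one_lt]
        simp
      · have hnd : ¬ q ∣ j := by
          intro hdvd
          obtain ⟨c, rfl⟩ := hdvd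
          have hc : 2 ≤ c := by
            rcases Nat.lt_or_ge c 2 with hc | hc
            · interval_cases c <;> simp_all
            · exact hc
          have := Nat.mul_le_mul_left q hc
          omega
        rw [if_neg h, padicValRat.of_nat, padicValNat.eq_zero_of_not_dvd hnd]
        simp
    rw [Finset.sum_congr rfl hsum, Finset.sum_ite_eq' (Finset.Icc 1 k) q]
    rw [if_pos (Finset.mem_Icc.2 ⟨hq.one_lt.le, hqk⟩)]
  have hexp_ne : expnt k a d q ≠ 0 := by
    unfold expnt
    have h1 : (k.choose q : ℤ) ≠ 0 := by
      exact_mod_cast (Nat.choose_pos hqk).ne'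
    have h2 : (q : ℤ) ^ a ≠ 0 := pow_ne_zero _ (by exact_mod_cast hq.pos.ne')
    have h3 : (d : ℤ) ≠ 0 := by exact_mod_cast by omega
    positivity
  refine ⟨q, hq, h2q, hqk, ?_, hexp_ne, ?_, ?_⟩
  · rw [vpQ, if_neg hprod_ne, hval]
  · intro h
    rw [h, padicValRat.one] at hval
    exact hexp_ne hval.symm
  · intro h
    rw [h, padicValRat.neg, padicValRat.one] at hval
    exact hexp_ne hval.symm
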